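/- Let N ≥ 3. In ℝ^{N(N-1)/2}, indexed by pairs (i,j) with 1 ≤ i < j ≤ N, consider the vectors F_k (1 ≤ k ≤ N) defined componentwise by (F_k)_{lm} = -c/(N-1)² if k ∉ {l,m} and (F_k)_{lm} = c/(N-1) if k ∈ {l,m}, and the vectors F_{ij} (1 ≤ i < j ≤ N) defined by (F_{ij})_{ij} = c(N²-2)/(N(N-1)²), (F_{ij})_{lm} = -2c(N+1)/(N(N-1)²) if {l,m} ∩ {i,j} = ∅, and (F_{ij})_{lm} = c(N²-N-2)/(N(N-1)²) if {l,m} ∩ {i,j} is a singleton, where c > 0 is a fixed constant. Then the span of all the vectors F_k and F_{ij} is all of ℝ^{N(N-1)/2}. -/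

import Mathlib

/-- Index set of pairs `(l, m)` with `l < m` in `Fin N`. -/
def PairIdx (N : ℕ) := {p : Fin N × Fin N // p.1 < p.2}

instance (N : ℕ) : DecidableEq (PairIdx N) := Subtype.instDecidableEq

/-- The vector `F_k`: component at a pair `(l,m)` is `c/(N-1)` if `k ∈ {l,m}`,
and `-c/(N-1)²` otherwise. -/
noncomputable def Fvert (N : ℕ) (c : ℝ) (k : Fin N) : PairIdx N → ℝ := fun p =>
  if k = p.val.1 ∨ k = p.val.2 then c / ((N : ℝ) - 1)
  else -c / ((N : ℝ) - 1) ^ 2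

/-- The vector `F_{ij}` (for the pair `q = (i,j)`). -/
noncomputable def Fedge (N : ℕ) (c : ℝ) (q : PairIdx N) : PairIdx N → ℝ := fun p =>
  if p = q then c * ((N : ℝ) ^ 2 - 2) / ((N : ℝ) * ((N : ℝ) - 1) ^ 2)
  else if p.val.1 ≠ q.val.1 ∧ p.val.1 ≠ q.val.2 ∧ p.val.2 ≠ q.val.1 ∧ p.val.2 ≠ q.val.2 then
    -(2 * c * ((N : ℝ) + 1)) / ((N : ℝ) * ((N : ℝ) - 1) ^ 2)
  else c * ((N : ℝ) ^ 2 - (N : ℝ) - 2) / ((N : ℝ) * ((N : ℝ) - 1) ^ 2)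

instance (N : ℕ) : Fintype (PairIdx N) := by unfold PairIdx; infer_instance

theorem stmt_11 (N : ℕ) (hN : 3 ≤ N) (c : ℝ) (hc : 0 < c) :
    Submodule.span ℝ (Set.range (Fvert N c) ∪ Set.range (Fedge N c)) =
      (⊤ : Submodule ℝ (PairIdx N → ℝ)) := by
  set S := Submodule.span ℝ (Set.range (Fvert N c) ∪ Set.range (Fedge N c)) with hS
  have hN3 : (3:ℝ) ≤ (N:ℝ) := by exact_mod_cast hN
  have h1 : (N:ℝ) - 1 ≠ 0 := by linarith
  have hNne : (N:ℝ) ≠ 0 := by linarith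
  have hcne : c ≠ 0 := ne_of_gt hc
  have hFv : ∀ k, Fvert N c k ∈ S := fun k =>
    Submodule.subset_span (Or.inl ⟨k, rfl⟩)
  have hFe : ∀ q, Fedge N c q ∈ S := fun q =>
    Submodule.subset_span (Or.inr ⟨q, rfl⟩)
  -- each pair contains exactly two vertices
  have hchi_sum : ∀ p : PairIdx N,
      (∑ k : Fin N, (if k = p.val.1 ∨ k = p.val.2 then (1:ℝ) else 0)) = 2 := by
    intro p
    have hne : p.val.1 ≠ p.val.2 := ne_of_lt p.2
    have hsplit : ∀ k : Fin N, (if k = p.val.1 ∨ k = p.val.2 then (1:ℝ) else 0)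
        = (if k = p.val.1 then (1:ℝ) else 0) + (if k = p.val.2 then (1:ℝ) else 0) := by
      intro k
      by_cases hk1 : k = p.val.1 <;> by_cases hk2 : k = p.val.2 <;> simp_all
    simp_rw [hsplit]
    rw [Finset.sum_add_distrib]
    simp
    norm_num
  -- the all-ones vector is in S
  have hones : (fun _ : PairIdx N => (1:ℝ)) ∈ S := by
    have hsum : (∑ k : Fin N, Fvert N c k) ∈ S := S.sum_mem fun k _ => hFv k
    have hmem := S.smul_mem (((N:ℝ)-1)^2 / (c * N)) hsum
    convert hmem using 1
    funext p
    have hval : (∑ k : Fin N, Fvert N c k) p = c * N / ((N:ℝ)-1)^2 := by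
      have rw1 : ∀ k : Fin N, Fvert N c k p =
          (c/((N:ℝ)-1) + c/((N:ℝ)-1)^2) *
            (if k = p.val.1 ∨ k = p.val.2 then (1:ℝ) else 0) - c/((N:ℝ)-1)^2 := by
        intro k
        unfold Fvert
        by_cases h : k = p.val.1 ∨ k = p.val.2 <;> simp [h] <;> ring
      rw [Finset.sum_apply]
      simp_rw [rw1]
      rw [Finset.sum_sub_distrib, ← Finset.mul_sum, hchi_sum p]
      simp only [Finset.sum_const, Finset.card_univ, Fintype.card_fin, nsmul_eq_mul]
      field_simp
      ring
    simp only [Pi.smul_apply, smul_eq_mul, hval]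
    field_simp
  -- vertex indicators are in S
  have hchi : ∀ k : Fin N,
      (fun p : PairIdx N => if k = p.val.1 ∨ k = p.val.2 then (1:ℝ) else 0) ∈ S := by
    intro k
    have hmem := S.add_mem (S.smul_mem (((N:ℝ)-1)^2/(c*N)) (hFv k))
      (S.smul_mem (1/(N:ℝ)) hones)
    convert hmem using 1
    funext p
    simp only [Pi.add_apply, Pi.smul_apply, smul_eq_mul, Fvert]
    by_cases h : k = p.val.1 ∨ k = p.val.2 <;> simp [h] <;> field_simp <;> ring
  -- standard basis vectors are in S
  have hind : ∀ q : PairIdx N,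
      (fun p : PairIdx N => if q = p then (1:ℝ) else 0) ∈ S := by
    intro q
    have hmem := S.smul_mem (-((N:ℝ)-1)^2/(c*N))
      (S.sub_mem (S.sub_mem (hFe q)
        (S.smul_mem (c*((N:ℝ)+1)/((N:ℝ)-1)^2)
          (S.add_mem (hchi q.val.1) (hchi q.val.2))))
        (S.smul_mem (-(2*c*((N:ℝ)+1))/((N:ℝ)*((N:ℝ)-1)^2)) hones))
    convert hmem using 1
    funext p
    simp only [Pi.smul_apply, Pi.sub_apply, Pi.add_apply, smul_eq_mul, Fedge]
    by_cases hpq : p = q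
    · subst hpq
      have h1' : (p.val.1 = p.val.1 ∨ p.val.1 = p.val.2) := Or.inl rfl
      have h2' : (p.val.2 = p.val.1 ∨ p.val.2 = p.val.2) := Or.inr rfl
      simp only [if_pos rfl, if_pos h1', if_pos h2', true_or, or_true, if_true]
      field_simp
      ring
    · have hqp : ¬ (q = p) := fun h => hpq h.symm
      rw [if_neg hqp, if_neg hpq]
      by_cases hdis : p.val.1 ≠ q.val.1 ∧ p.val.1 ≠ q.val.2 ∧ p.val.2 ≠ q.val.1 ∧
          p.val.2 ≠ q.val.2
      · have hc1 : ¬ (q.val.1 = p.val.1 ∨ q.val.1 = p.val.2) := by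
          rcases hdis with ⟨a, b, d, e⟩
          rintro (h | h) <;> [exact a h.symm; exact d h.symm]
        have hc2 : ¬ (q.val.2 = p.val.1 ∨ q.val.2 = p.val.2) := by
          rcases hdis with ⟨a, b, d, e⟩
          rintro (h | h) <;> [exact b h.symm; exact e h.symm]
        rw [if_pos hdis, if_neg hc1, if_neg hc2]
        ring
      · rw [if_neg hdis]
        -- exactly one vertex is shared
        have hpp : p.val.1 < p.val.2 := p.2
        have hqq : q.val.1 < q.val.2 := q.2
        by_cases hi : q.val.1 = p.val.1 ∨ q.val.1 = p.val.2 <;>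
          by_cases hj : q.val.2 = p.val.1 ∨ q.val.2 = p.val.2
        · exfalso
          rcases hi with hi | hi <;> rcases hj with hj | hj
          · exact absurd (hi.trans hj.symm) (ne_of_lt hqq)
          · exact hpq (Subtype.ext (Prod.ext hi.symm hj.symm))
          · have hlt : q.val.2 < q.val.1 := by rw [hj, hi]; exact hpp
            exact absurd hqq (not_lt_of_gt hlt)
          · exact absurd (hi.trans hj.symm) (ne_of_lt hqq)
        · rw [if_pos hi, if_neg hj]
          field_simp
          ring
        · rw [if_neg hi, if_pos hj]
          field_simp
          ring
        · exfalso
          push_neg at hi hj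
          exact hdis ⟨fun h => hi.1 h.symm, fun h => hj.1 h.symm,
            fun h => hi.2 h.symm, fun h => hj.2 h.symm⟩
  -- conclude
  rw [eq_top_iff]
  intro x _
  rw [pi_eq_sum_univ x]
  exact S.sum_mem fun q _ => S.smul_mem _ (hind q)
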